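/- In the setting of the previous abstraction (linear τ_+, bilinear pairing ⟨· ·⟩, T(W) = τ_+(W) − ∑_α ⟨W γ^α⟩ γ_α), assume additionally the 'string recursion' identity ⟨T(W) V⟩ = −⟨W τ_+(V)⟩ for all W, V. Then for all k ≥ 0 and all W: T^k(W) = τ_k(W) − ∑_{i=0}^{k-1} (−1)^i ⟨W τ_i(γ^α)⟩ τ_{k-1-i}(γ_α). -/

import Mathlib

lemma str_iter {R X : Type*} [CommRing R] [AddCommGroup X] [Module R X]
    (p : X →ₗ[R] X →ₗ[R] R) (τ : X →ₗ[R] X) (T : X →ₗ[R] X)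
    (hstr : ∀ W V : X, p (T W) V = - p W (τ V)) :
    ∀ (k : ℕ) (W V : X), p ((T ^ k) W) V = (-1 : R) ^ k * p W ((τ ^ k) V) := by
  intro k
  induction k with
  | zero => intro W V; simp
  | succ n ih =>
    intro W V
    have h1 : (T ^ (n + 1)) W = T ((T ^ n) W) := by
      rw [pow_succ']; rfl
    rw [h1, hstr, ih]
    have h2 : (τ ^ n) (τ V) = (τ ^ (n + 1)) V := by
      rw [pow_succ]; rfl
    rw [h2]
    ring

/-- Equation (22): assuming the string recursion `⟨T(W), V⟩ = -⟨W, τ₊(V)⟩`,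
`T^k(W) = τ_k(W) - ∑_{i=0}^{k-1} (-1)^i ⟨W, τ_i(γ^α)⟩ • τ_{k-1-i}(γ_α)`. -/
theorem T_pow_eq_tau_pow_sub_correction
    {R X : Type*} [CommRing R] [AddCommGroup X] [Module R X]
    (N : ℕ) (e e' : Fin N → X)
    (p : X →ₗ[R] X →ₗ[R] R) (τ : X →ₗ[R] X) (T : X →ₗ[R] X)
    (hT : ∀ W : X, T W = τ W - ∑ α, p W (e' α) • e α)
    (hstr : ∀ W V : X, p (T W) V = - p W (τ V)) :
    ∀ (k : ℕ) (W : X),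
      (T ^ k) W = (τ ^ k) W
        - ∑ i ∈ Finset.range k, ∑ α,
            ((-1 : R) ^ i * p W ((τ ^ i) (e' α))) • (τ ^ (k - 1 - i)) (e α) := by
  intro k
  induction k with
  | zero => intro W; simp
  | succ n ih =>
    intro W
    have h1 : (T ^ (n + 1)) W = T ((T ^ n) W) := by rw [pow_succ']; rfl
    rw [h1, hT]
    simp only [str_iter p τ T hstr n]
    rw [ih]
    have h2 : ∀ V : X, τ ((τ ^ n) V) = (τ ^ (n + 1)) V := by
      intro V; rw [pow_succ']; rfl
    rw [Finset.sum_range_succ]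
    simp only [map_sub, map_sum, map_smul, h2]
    have h3 : ∀ i ∈ Finset.range n, ∀ α,
        τ ((τ ^ (n - 1 - i)) (e α)) = (τ ^ (n + 1 - 1 - i)) (e α) := by
      intro i hi α
      rw [Finset.mem_range] at hi
      have : n + 1 - 1 - i = (n - 1 - i) + 1 := by omega
      rw [this, pow_succ']; rfl
    rw [Finset.sum_congr rfl (fun i hi => Finset.sum_congr rfl (fun α _ => by rw [h3 i hi α]))]
    have h4 : n + 1 - 1 - n = 0 := by omega
    rw [h4]
    have h5 : ∀ α, ((-1:R) ^ n * p W ((τ ^ n) (e' α))) • ((τ ^ 0) (e α))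
        = ((-1:R) ^ n * p W ((τ ^ n) (e' α))) • e α := by
      intro α; rw [pow_zero, Module.End.one_apply]
    rw [Finset.sum_congr rfl (fun α _ => h5 α), sub_sub]
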